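/- Let n ≥ 13 be odd and let G be a graph on n vertices with δ(G) ≥ (n+1)/2. If there exists A ⊆ V(G) with |A| = (n+1)/2 and ⟨A⟩_3 = A, then m(G, 3) = 3. -/

import Mathlib

open Finset

open scoped Classical

noncomputable section

variable {V : Type*}

/-- Number of neighbours of `v` inside the set `A`. -/
def nbrsIn (G : SimpleGraph V) (A : Finset V) (v : V) : ℕ :=
  (A.filter (fun u => G.Adj v u)).card

/-- One step of the `r`-neighbour bootstrap process. -/
def bootStep [Fintype V] (G : SimpleGraph V) (r : ℕ) (A : Finset V) : Finset V :=
  A ∪ Finset.univ.filter (fun v => r ≤ nbrsIn G A v)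

/-- The sets `A_t` of the `r`-neighbour bootstrap process started at `A`. -/
def bootSeq [Fintype V] (G : SimpleGraph V) (r : ℕ) (A : Finset V) : ℕ → Finset V
  | 0 => A
  | t + 1 => bootStep G r (bootSeq G r A t)

/-- `A` is closed under the `r`-neighbour bootstrap rule. -/
def BootClosed (G : SimpleGraph V) (r : ℕ) (A : Finset V) : Prop :=
  ∀ v, r ≤ nbrsIn G A v → v ∈ A

/-- The `r`-neighbour bootstrap closure `⟨A⟩_r`: the smallest closed superset of `A`. -/
def bootClosure [Fintype V] (G : SimpleGraph V) (r : ℕ) (A : Finset V) : Finset V :=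
  Finset.univ.filter (fun v => ∀ B : Finset V, A ⊆ B → BootClosed G r B → v ∈ B)

/-- `m(G, r)`: the minimum size of a percolating set. -/
def minPerc [Fintype V] (G : SimpleGraph V) (r : ℕ) : ℕ :=
  sInf {k | ∃ A : Finset V, A.card = k ∧ bootClosure G r A = Finset.univ}

end

section helpers
variable {V : Type*} [Fintype V] (G : SimpleGraph V)

lemma mem_bootClosure_iff {r : ℕ} {A : Finset V} {v : V} :
    v ∈ bootClosure G r A ↔ ∀ B : Finset V, A ⊆ B → BootClosed G r B → v ∈ B := by
  simp [bootClosure]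

lemma subset_bootClosure (r : ℕ) (A : Finset V) : A ⊆ bootClosure G r A := fun v hv =>
  (mem_bootClosure_iff G).2 fun B hAB _ => hAB hv

lemma nbrsIn_mono {A B : Finset V} (h : A ⊆ B) (v : V) : nbrsIn G A v ≤ nbrsIn G B v :=
  Finset.card_le_card (Finset.filter_subset_filter _ h)

lemma bootClosed_bootClosure (r : ℕ) (A : Finset V) : BootClosed G r (bootClosure G r A) := by
  intro v hv
  rw [mem_bootClosure_iff]
  intro B hAB hB
  apply hB
  refine le_trans hv (nbrsIn_mono G ?_ v)
  intro x hx
  exact (mem_bootClosure_iff G).1 hx B hAB hB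

lemma bootClosure_subset {r : ℕ} {A B : Finset V} (hAB : A ⊆ B) (hB : BootClosed G r B) :
    bootClosure G r A ⊆ B := fun v hv => (mem_bootClosure_iff G).1 hv B hAB hB

lemma nbrsIn_le_card (A : Finset V) (v : V) : nbrsIn G A v ≤ A.card := Finset.card_filter_le _ _

lemma nbrsIn_subset_erase (A : Finset V) (v : V) :
    A.filter (fun u => G.Adj v u) ⊆ A.erase v := by
  intro u hu
  rw [Finset.mem_filter] at hu
  exact Finset.mem_erase.2 ⟨fun h => G.irrefl (h ▸ hu.2), hu.1⟩

lemma degree_eq_nbrsIn (A : Finset V) (v : V) :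
    G.degree v = nbrsIn G A v + nbrsIn G Aᶜ v := by
  rw [← SimpleGraph.card_neighborFinset_eq_degree, SimpleGraph.neighborFinset_eq_filter,
    nbrsIn, nbrsIn, ← Finset.card_union_of_disjoint
      (Finset.disjoint_filter_filter disjoint_compl_right),
    ← Finset.filter_union, Finset.union_compl]

end helpers

theorem stmt_11 {V : Type*} [Fintype V] (G : SimpleGraph V) (n : ℕ)
    (hn : Fintype.card V = n) (h13 : 13 ≤ n) (hodd : Odd n)
    (hδ : (n + 1) / 2 ≤ G.minDegree)
    (A : Finset V) (hcard : A.card = (n + 1) / 2) (hclosed : bootClosure G 3 A = A) :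
    minPerc G 3 = 3 := by
  classical
  obtain ⟨m, hm⟩ := hodd
  have hm6 : 6 ≤ m := by omega
  set B := Aᶜ with hBdef
  have hAcard : A.card = m + 1 := by rw [hcard]; omega
  have hBcard : B.card = m := by
    rw [hBdef, Finset.card_compl, hAcard, hn]; omega
  have hclosedA : BootClosed G 3 A := by
    rw [← hclosed]; exact bootClosed_bootClosure G 3 A
  have hdeg : ∀ v, m + 1 ≤ G.degree v := by
    intro v
    have h1 : m + 1 ≤ G.minDegree := by omega
    exact le_trans h1 (G.minDegree_le_degree v)
  -- each vertex of B has at most 2 neighbours in A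
  have hBle2 : ∀ b ∈ B, nbrsIn G A b ≤ 2 := by
    intro b hb
    by_contra h
    push_neg at h
    exact (Finset.mem_compl.1 hb) (hclosedA b h)
  -- B is a clique
  have hBB : ∀ b ∈ B, B.filter (fun u => G.Adj b u) = B.erase b := by
    intro b hb
    refine (Finset.eq_of_subset_of_card_le (nbrsIn_subset_erase G B b) ?_)
    have h1 := degree_eq_nbrsIn G A b
    have h2 := hdeg b
    have h3 := hBle2 b hb
    have h4 : (B.erase b).card = m - 1 := by rw [Finset.card_erase_of_mem hb, hBcard]
    have h5 : nbrsIn G Aᶜ b = nbrsIn G B b := rfl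
    rw [h5] at h1
    rw [h4]
    show m - 1 ≤ nbrsIn G B b
    omega
  have hclique : ∀ b ∈ B, ∀ b' ∈ B, b' ≠ b → G.Adj b b' := by
    intro b hb b' hb' hne
    have h1 : b' ∈ B.filter (fun u => G.Adj b u) := by
      rw [hBB b hb]; exact Finset.mem_erase.2 ⟨hne, hb'⟩
    exact (Finset.mem_filter.1 h1).2
  -- each vertex of B has at least 2 neighbours in A
  have hB2 : ∀ b ∈ B, 2 ≤ nbrsIn G A b := by
    intro b hb
    have h1 := degree_eq_nbrsIn G A b
    have h2 := hdeg b
    have h3 : nbrsIn G Aᶜ b ≤ (B.erase b).card :=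
      Finset.card_le_card (by rw [hBdef]; exact nbrsIn_subset_erase G B b)
    have h4 : (B.erase b).card = m - 1 := by rw [Finset.card_erase_of_mem hb, hBcard]
    omega
  -- double counting
  have hdc : ∑ a ∈ A, nbrsIn G B a = ∑ b ∈ B, nbrsIn G A b := by
    simp only [nbrsIn, Finset.card_filter]
    rw [Finset.sum_comm]
    exact Finset.sum_congr rfl fun b _ => Finset.sum_congr rfl fun a _ =>
      if_congr (G.adj_comm _ _) rfl rfl
  -- some a2 in A has at least 2 neighbours in B
  obtain ⟨a2, ha2A, ha2B⟩ : ∃ a2 ∈ A, 2 ≤ nbrsIn G B a2 := by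
    by_contra h
    push_neg at h
    have h1 : ∑ a ∈ A, nbrsIn G B a ≤ A.card * 1 :=
      Finset.sum_le_card_nsmul A _ 1 fun a ha => by have := h a ha; omega
    have h2 : B.card * 2 ≤ ∑ b ∈ B, nbrsIn G A b :=
      Finset.card_nsmul_le_sum B _ 2 hB2
    rw [hdc] at h1
    rw [hAcard] at h1
    rw [hBcard] at h2
    omega
  -- a2 has a neighbour a1 in A
  obtain ⟨a1, ha1⟩ : (A.filter (fun u => G.Adj a2 u)).Nonempty := by
    rw [← Finset.card_pos]
    have h1 := degree_eq_nbrsIn G A a2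
    have h2 := hdeg a2
    have h3 : nbrsIn G Aᶜ a2 ≤ B.card := by rw [hBdef] at *; exact nbrsIn_le_card G B a2
    rw [hBcard] at h3
    change 0 < nbrsIn G A a2
    omega
  rw [Finset.mem_filter] at ha1
  obtain ⟨ha1A, hadj21⟩ := ha1
  -- a1 has a neighbour b3 in B
  obtain ⟨b3, hb3⟩ : (B.filter (fun u => G.Adj a1 u)).Nonempty := by
    rw [← Finset.card_pos]
    have h1 := degree_eq_nbrsIn G A a1
    have h2 := hdeg a1
    have h3 : nbrsIn G A a1 ≤ (A.erase a1).card :=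
      Finset.card_le_card (nbrsIn_subset_erase G A a1)
    have h4 : (A.erase a1).card = m := by
      rw [Finset.card_erase_of_mem ha1A, hAcard]
      omega
    have h5 : 0 < nbrsIn G Aᶜ a1 := by omega
    show 0 < nbrsIn G B a1
    exact h5
  rw [Finset.mem_filter] at hb3
  obtain ⟨hb3B, hadj13⟩ := hb3
  -- pick b1 b2 distinct in B minus b3
  obtain ⟨b1, hb1, b2, hb2, hb12⟩ : ∃ b1 ∈ B.erase b3, ∃ b2 ∈ B.erase b3, b1 ≠ b2 := by
    rw [← Finset.one_lt_card]
    rw [Finset.card_erase_of_mem hb3B, hBcard]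
    omega
  obtain ⟨hb1ne3, hb1B⟩ := Finset.mem_erase.1 hb1
  obtain ⟨hb2ne3, hb2B⟩ := Finset.mem_erase.1 hb2
  have hAB_ne : ∀ a ∈ A, ∀ b ∈ B, a ≠ b := by
    intro a ha b hb hab
    exact (Finset.mem_compl.1 hb) (hab ▸ ha)
  have ha1b1 : a1 ≠ b1 := hAB_ne a1 ha1A b1 hb1B
  have ha1b2 : a1 ≠ b2 := hAB_ne a1 ha1A b2 hb2B
  -- the seed
  set S : Finset V := insert a1 {b1, b2} with hSdef
  have hScard : S.card = 3 := by
    rw [hSdef, Finset.card_insert_of_notMem (by simp [ha1b1, ha1b2]),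
      Finset.card_insert_of_notMem (by simp [hb12]), Finset.card_singleton]
  set C := bootClosure G 3 S with hCdef
  have hSC : S ⊆ C := subset_bootClosure G 3 S
  have hCclosed : BootClosed G 3 C := bootClosed_bootClosure G 3 S
  have ha1C : a1 ∈ C := hSC (by simp [hSdef])
  have hb1C : b1 ∈ C := hSC (by simp [hSdef])
  have hb2C : b2 ∈ C := hSC (by simp [hSdef])
  -- infection helper
  have hadd : ∀ v x y z : V, x ∈ C → y ∈ C → z ∈ C → G.Adj v x → G.Adj v y → G.Adj v z →
      x ≠ y → x ≠ z → y ≠ z → v ∈ C := by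
    intro v x y z hx hy hz hax hay haz hxy hxz hyz
    apply hCclosed
    have hsub : ({x, y, z} : Finset V) ⊆ C.filter (fun u => G.Adj v u) := by
      intro u hu
      simp only [Finset.mem_insert, Finset.mem_singleton] at hu
      rcases hu with rfl | rfl | rfl <;> exact Finset.mem_filter.2 ⟨‹_›, ‹_›⟩
    have hc3 : ({x, y, z} : Finset V).card = 3 := by
      rw [Finset.card_insert_of_notMem (by simp [hxy, hxz]),
        Finset.card_insert_of_notMem (by simp [hyz]), Finset.card_singleton]
    calc 3 = ({x, y, z} : Finset V).card := hc3.symm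
      _ ≤ _ := Finset.card_le_card hsub
  have hb3C : b3 ∈ C :=
    hadd b3 a1 b1 b2 ha1C hb1C hb2C (G.adj_symm hadj13)
      (hclique b3 hb3B b1 hb1B hb1ne3) (hclique b3 hb3B b2 hb2B hb2ne3)
      ha1b1 ha1b2 hb12
  have hBC : B ⊆ C := by
    intro b hb
    by_cases h1 : b = b1; · exact h1 ▸ hb1C
    by_cases h2 : b = b2; · exact h2 ▸ hb2C
    by_cases h3 : b = b3; · exact h3 ▸ hb3C
    exact hadd b b1 b2 b3 hb1C hb2C hb3C
      (hclique b hb b1 hb1B (fun h => h1 h.symm))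
      (hclique b hb b2 hb2B (fun h => h2 h.symm))
      (hclique b hb b3 hb3B (fun h => h3 h.symm))
      hb12 hb1ne3 hb2ne3
  -- infect a2
  obtain ⟨c1, hc1, c2, hc2, hc12⟩ :
      ∃ c1 ∈ B.filter (fun u => G.Adj a2 u), ∃ c2 ∈ B.filter (fun u => G.Adj a2 u), c1 ≠ c2 := by
    rw [← Finset.one_lt_card]
    have := ha2B
    rw [nbrsIn] at this
    omega
  rw [Finset.mem_filter] at hc1 hc2
  have ha2C : a2 ∈ C :=
    hadd a2 a1 c1 c2 ha1C (hBC hc1.1) (hBC hc2.1) hadj21 hc1.2 hc2.2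
      (hAB_ne a1 ha1A c1 hc1.1) (hAB_ne a1 ha1A c2 hc2.1) hc12
  have ha12 : a2 ≠ a1 := G.ne_of_adj hadj21
  -- C is everything
  have hCuniv : C = Finset.univ := by
    by_contra h
    have h' : ¬ ∀ v, v ∈ C := fun hh => h (Finset.eq_univ_iff_forall.2 hh)
    push_neg at h'
    obtain ⟨v, hv⟩ := h'
    have hnb : nbrsIn G C v ≤ 2 := by
      by_contra h2
      push_neg at h2
      exact hv (hCclosed v h2)
    have h1 := degree_eq_nbrsIn G C v
    have h2 := hdeg v
    have hvC : v ∈ Cᶜ := Finset.mem_compl.2 hv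
    have h3 : nbrsIn G Cᶜ v ≤ (Cᶜ.erase v).card :=
      Finset.card_le_card (nbrsIn_subset_erase G Cᶜ v)
    have h4 : (Cᶜ.erase v).card = Cᶜ.card - 1 := Finset.card_erase_of_mem hvC
    have h5 : 0 < Cᶜ.card := Finset.card_pos.2 ⟨v, hvC⟩
    have hsub : Cᶜ ⊆ (A.erase a1).erase a2 := by
      intro x hx
      rw [Finset.mem_compl] at hx
      have hxA : x ∈ A := by
        by_contra hxA
        exact hx (hBC (Finset.mem_compl.2 hxA))
      exact Finset.mem_erase.2 ⟨fun he => hx (he ▸ ha2C),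
        Finset.mem_erase.2 ⟨fun he => hx (he ▸ ha1C), hxA⟩⟩
    have h6 : Cᶜ.card ≤ m - 1 := by
      have := Finset.card_le_card hsub
      rw [Finset.card_erase_of_mem (Finset.mem_erase.2 ⟨ha12, ha2A⟩),
        Finset.card_erase_of_mem ha1A, hAcard] at this
      omega
    omega
  -- conclude
  have h3mem : 3 ∈ {k | ∃ T : Finset V, T.card = k ∧ bootClosure G 3 T = Finset.univ} :=
    ⟨S, hScard, hCuniv⟩
  have hlb : ∀ k ∈ {k | ∃ T : Finset V, T.card = k ∧ bootClosure G 3 T = Finset.univ}, 3 ≤ k := by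
    rintro k ⟨T, hT, hTu⟩
    by_contra hk
    push_neg at hk
    have hTclosed : BootClosed G 3 T := by
      intro v hv
      have := nbrsIn_le_card G T v
      omega
    have hsub : bootClosure G 3 T ⊆ T :=
      bootClosure_subset G (Finset.Subset.refl T) hTclosed
    rw [hTu] at hsub
    have := Finset.card_le_card hsub
    rw [Finset.card_univ, hn, hT] at this
    omega
  rw [minPerc]
  exact le_antisymm (Nat.sInf_le h3mem) (le_csInf ⟨3, h3mem⟩ hlb)
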